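/- For i = 1,…,n let Ω_i be a real locally convex topological vector space with its Borel σ-algebra, A_i ⊆ Ω_i a closed convex set, and Δ_i ⊆ A_i, and suppose every point x_i ∈ A_i is the barycenter of some Borel probability measure ν_i on Ω_i with ν_i(Δ_i) = 1 (i.e. every continuous linear functional l on Ω_i is ν_i-integrable and l(x_i) = ∫ l dν_i). Equip the product Ω₁ × ⋯ × Ω_n with the product topology and let f : Ω₁ × ⋯ × Ω_n → ℝ be marginally quasi-convex and marginally lower semicontinuous on A₁ × ⋯ × A_n. Then sup{ f(x₁,…,x_n) : x_i ∈ A_i for all i } = sup{ f(x₁,…,x_n) : x_i ∈ Δ_i for all i }. -/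

import Mathlib

open MeasureTheory

lemma bary_mem' {E : Type*} [AddCommGroup E] [Module ℝ E] [TopologicalSpace E]
    [IsTopologicalAddGroup E] [ContinuousSMul ℝ E] [LocallyConvexSpace ℝ E]
    [MeasurableSpace E] [BorelSpace E]
    {C : Set E} (hC : IsClosed C) (hconv : Convex ℝ C)
    {ν : Measure E} [IsProbabilityMeasure ν] (hν : ν C = 1)
    {x : E} (hx : ∀ l : E →L[ℝ] ℝ, Integrable (fun y => l y) ν ∧ l x = ∫ y, l y ∂ν) :
    x ∈ C := by
  by_contra hxC
  obtain ⟨l, u, hlu, hux⟩ := geometric_hahn_banach_closed_point hconv hC hxC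
  obtain ⟨hint, hxl⟩ := hx l
  have hae : ∀ᵐ y ∂ν, y ∈ C := by
    rw [MeasureTheory.ae_iff]
    have := measure_compl hC.measurableSet (measure_ne_top ν C)
    exact (by simpa [hν, Set.compl_setOf] using this : ν Cᶜ = 0)
  have hle : ∫ y, l y ∂ν ≤ ∫ _, u ∂ν :=
    integral_mono_ae hint (integrable_const u) (hae.mono fun y hy => (hlu y hy).le)
  simp [integral_const] at hle
  linarith

theorem stmt_15
    {n : ℕ} (Ω : Fin n → Type*) [∀ i, AddCommGroup (Ω i)] [∀ i, Module ℝ (Ω i)]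
    [∀ i, TopologicalSpace (Ω i)] [∀ i, IsTopologicalAddGroup (Ω i)]
    [∀ i, ContinuousSMul ℝ (Ω i)] [∀ i, LocallyConvexSpace ℝ (Ω i)]
    [∀ i, MeasurableSpace (Ω i)] [∀ i, BorelSpace (Ω i)]
    (A Δ : ∀ i, Set (Ω i)) (hAc : ∀ i, IsClosed (A i)) (hAconv : ∀ i, Convex ℝ (A i))
    (hΔA : ∀ i, Δ i ⊆ A i)
    (hbary : ∀ i, ∀ x ∈ A i, ∃ ν : Measure (Ω i), IsProbabilityMeasure ν ∧ ν (Δ i) = 1 ∧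
      ∀ l : Ω i →L[ℝ] ℝ, Integrable (fun y => l y) ν ∧ l x = ∫ y, l y ∂ν)
    (f : (∀ i, Ω i) → ℝ)
    (hfqc : ∀ (i : Fin n) (x : ∀ k, Ω k), (∀ k, k ≠ i → x k ∈ A k) →
      ∀ y ∈ A i, ∀ z ∈ A i, ∀ lam : ℝ, lam ∈ Set.Icc (0 : ℝ) 1 →
        f (Function.update x i (lam • y + (1 - lam) • z)) ≤
          max (f (Function.update x i y)) (f (Function.update x i z)))
    (hflsc : ∀ (i : Fin n) (x : ∀ k, Ω k), (∀ k, k ≠ i → x k ∈ A k) →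
      ∀ a : ℝ, IsClosed {y ∈ A i | f (Function.update x i y) ≤ a}) :
    (⨆ x ∈ {x : ∀ i, Ω i | ∀ i, x i ∈ A i}, (f x : EReal)) =
      ⨆ x ∈ {x : ∀ i, Ω i | ∀ i, x i ∈ Δ i}, (f x : EReal) := by
  set RHS := ⨆ x ∈ {x : ∀ i, Ω i | ∀ i, x i ∈ Δ i}, (f x : EReal) with hRHS
  apply le_antisymm
  · have key : ∀ (m : ℕ) (x : ∀ i, Ω i), (∀ i, x i ∈ A i) →
        (∀ i : Fin n, m ≤ (i : ℕ) → x i ∈ Δ i) → (f x : EReal) ≤ RHS := by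
      intro m
      induction m with
      | zero =>
        intro x _ hΔx
        exact le_iSup₂ (f := fun x _ => (f x : EReal)) x (fun i => hΔx i (Nat.zero_le _))
      | succ m ih =>
        intro x hxA hxΔ
        by_cases hm : m < n
        · set i : Fin n := ⟨m, hm⟩ with hi
          have hclaim : ∀ y ∈ Δ i, (f (Function.update x i y) : EReal) ≤ RHS := by
            intro y hy
            refine ih _ (fun k => ?_) (fun k hk => ?_)
            · rcases eq_or_ne k i with rfl | hki
              · simpa using hΔA i hy
              · rw [Function.update_of_ne hki]; exact hxA k
            · rcases eq_or_ne k i with rfl | hki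
              · simpa using hy
              · rw [Function.update_of_ne hki]
                refine hxΔ k ?_
                have : (k : ℕ) ≠ m := fun h => hki (Fin.ext h)
                omega
          obtain ⟨ν, hprob, hν1, hl⟩ := hbary i (x i) (hxA i)
          have hΔi : (Δ i).Nonempty := by
            by_contra h
            rw [Set.not_nonempty_iff_eq_empty] at h
            rw [h] at hν1
            simp at hν1
          obtain ⟨y₀, hy₀⟩ := hΔi
          set s : EReal := ⨆ y ∈ Δ i, (f (Function.update x i y) : EReal) with hs
          have hsRHS : s ≤ RHS := iSup₂_le hclaim
          have hfx : (f x : EReal) = (f (Function.update x i (x i)) : EReal) := by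
            rw [Function.update_eq_self]
          rw [hfx]
          rcases eq_or_ne s ⊤ with hstop | hstop
          · exact le_trans (le_top.trans_eq hstop.symm) hsRHS
          · have hsbot : s ≠ ⊥ := by
              have : (f (Function.update x i y₀) : EReal) ≤ s :=
                le_iSup₂ (f := fun y _ => (f (Function.update x i y) : EReal)) y₀ hy₀
              exact fun h => by simp [h] at this
            set r : ℝ := s.toReal with hr
            have hsr : (r : EReal) = s := EReal.coe_toReal hstop hsbot
            have hΔr : ∀ y ∈ Δ i, f (Function.update x i y) ≤ r := by
              intro y hy
              have : (f (Function.update x i y) : EReal) ≤ (r : EReal) := by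
                rw [hsr]
                exact le_iSup₂ (f := fun y _ => (f (Function.update x i y) : EReal)) y hy
              exact_mod_cast this
            set C : Set (Ω i) := {y ∈ A i | f (Function.update x i y) ≤ r} with hC
            have hCclosed : IsClosed C := hflsc i x (fun k _ => hxA k) r
            have hCconv : Convex ℝ C := by
              intro y hy z hz a b ha hb hab
              constructor
              · exact hAconv i hy.1 hz.1 ha hb hab
              · have hb' : b = 1 - a := by linarith
                have := hfqc i x (fun k _ => hxA k) y hy.1 z hz.1 a ⟨ha, by linarith⟩
                rw [hb']
                calc f (Function.update x i (a • y + (1 - a) • z)) ≤ _ := this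
                  _ ≤ r := max_le hy.2 hz.2
            have hνC : ν C = 1 := by
              refine le_antisymm prob_le_one ?_
              rw [← hν1]
              exact measure_mono (fun y hy => ⟨hΔA i hy, hΔr y hy⟩)
            have hxC : x i ∈ C := bary_mem' hCclosed hCconv hνC hl
            calc (f (Function.update x i (x i)) : EReal) ≤ (r : EReal) := by
                  exact_mod_cast hxC.2
              _ = s := hsr
              _ ≤ RHS := hsRHS
        · refine ih x hxA (fun k hk => absurd k.isLt (by omega))
    refine iSup₂_le fun x hx => key n x hx (fun i hi => absurd i.isLt (by omega))
  · exact iSup₂_le fun x hx =>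
      le_iSup₂ (f := fun x _ => (f x : EReal)) x (fun i => hΔA i (hx i))
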